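/- arXiv:1806.05623 — 3 statements merged into one kernel-verified Lean document; each statement's English description precedes it below -/
import Mathlib

section
/- Let A be a CCR C*-algebra and let π and τ be nonzero irreducible representations of A on complex Hilbert spaces H_π and H_τ respectively. If ker π ⊆ ker τ, then π is unitarily equivalent to τ; that is, there exists a unitary operator U : H_π → H_τ such that U π(a) = τ(a) U for all a ∈ A. -/
open scoped InnerProductSpace


private theorem my_fd_of_compact_one {H : Type} [NormedAddCommGroup H] [InnerProductSpace ℂ H]
    (h : IsCompactOperator (⇑(1 : H →L[ℂ] H))) : FiniteDimensional ℂ H := by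
  obtain ⟨K, hK, hKmem⟩ := h
  have hpre : (⇑(1 : H →L[ℂ] H)) ⁻¹' K = K := by
    ext x; simp [ContinuousLinearMap.one_apply]
  rw [hpre] at hKmem
  have : LocallyCompactSpace H := hK.locallyCompactSpace_of_mem_nhds_of_addGroup hKmem
  exact FiniteDimensional.of_locallyCompactSpace ℂ

private theorem my_compact_of_fd {H : Type} [NormedAddCommGroup H] [InnerProductSpace ℂ H]
    [FiniteDimensional ℂ H] (T : H →L[ℂ] H) : IsCompactOperator (⇑T) := by
  haveI : ProperSpace H := FiniteDimensional.proper ℂ H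
  refine ⟨closure (T '' Metric.closedBall 0 1), ?_, ?_⟩
  · exact (T.lipschitz.isBounded_image Metric.isBounded_closedBall).isCompact_closure
  · exact Filter.mem_of_superset (Metric.closedBall_mem_nhds 0 one_pos)
      (fun x hx => subset_closure (Set.mem_image_of_mem _ hx))



/-- If `A` is a CCR C*-algebra and `π`, `τ` are nonzero irreducible
representations of `A` on complex Hilbert spaces with `ker π ⊆ ker τ`, then `π` and `τ`
are unitarily equivalent. -/
theorem ccr_rep_ker_subset_iff_unitarily_equiv
    {A : Type} [NormedRing A] [StarRing A] [CStarRing A]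
    [NormedAlgebra ℂ A] [StarModule ℂ A]
    -- `A` is CCR: every irreducible representation has range the compact operators
    (hCCR : ∀ (H : Type) [NormedAddCommGroup H] [InnerProductSpace ℂ H] [CompleteSpace H]
      (ρ : A →⋆ₐ[ℂ] (H →L[ℂ] H)),
      (∀ S : Submodule ℂ H, IsClosed (S : Set H) → (∀ a, ∀ x ∈ S, ρ a x ∈ S) →
        S = ⊥ ∨ S = ⊤) →
      Set.range ρ = {T : H →L[ℂ] H | IsCompactOperator T})
    {Hπ Hτ : Type}
    [NormedAddCommGroup Hπ] [InnerProductSpace ℂ Hπ] [CompleteSpace Hπ]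
    [NormedAddCommGroup Hτ] [InnerProductSpace ℂ Hτ] [CompleteSpace Hτ]
    (π : A →⋆ₐ[ℂ] (Hπ →L[ℂ] Hπ)) (τ : A →⋆ₐ[ℂ] (Hτ →L[ℂ] Hτ))
    (hπne : ∃ a, π a ≠ 0) (hτne : ∃ a, τ a ≠ 0)
    (hπirr : ∀ S : Submodule ℂ Hπ, IsClosed (S : Set Hπ) → (∀ a, ∀ x ∈ S, π a x ∈ S) →
      S = ⊥ ∨ S = ⊤)
    (hτirr : ∀ S : Submodule ℂ Hτ, IsClosed (S : Set Hτ) → (∀ a, ∀ x ∈ S, τ a x ∈ S) →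
      S = ⊥ ∨ S = ⊤)
    (hker : ∀ a : A, π a = 0 → τ a = 0) :
    ∃ U : Hπ ≃ₗᵢ[ℂ] Hτ, ∀ (a : A) (x : Hπ), U (π a x) = τ a (U x) := by

  have hπrange := hCCR Hπ π hπirr
  have hτrange := hCCR Hτ τ hτirr
  -- finite dimensionality
  haveI hfdπ : FiniteDimensional ℂ Hπ := by
    refine my_fd_of_compact_one ?_
    have : (1 : Hπ →L[ℂ] Hπ) ∈ Set.range π := ⟨1, map_one π⟩
    rw [hπrange] at this; exact this
  haveI hfdτ : FiniteDimensional ℂ Hτ := by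
    refine my_fd_of_compact_one ?_
    have : (1 : Hτ →L[ℂ] Hτ) ∈ Set.range τ := ⟨1, map_one τ⟩
    rw [hτrange] at this; exact this
  -- surjectivity of π
  have hπsurj : ∀ T : Hπ →L[ℂ] Hπ, ∃ a, π a = T := by
    intro T
    have : T ∈ Set.range π := by rw [hπrange]; exact my_compact_of_fd T
    exact this
  -- transfer along kernels
  have hτeq : ∀ b c : A, π b = π c → τ b = τ c := by
    intro b c h
    have := hker (b - c) (by rw [map_sub, h, sub_self])
    rw [map_sub, sub_eq_zero] at this; exact this
  -- a unit vector e in Hπ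
  obtain ⟨a0, ha0⟩ := hπne
  have : ∃ v : Hπ, v ≠ 0 := by
    by_contra h
    push_neg at h
    exact ha0 (ContinuousLinearMap.ext fun x => by rw [h (π a0 x)]; exact (h 0).symm ▸ rfl)
  obtain ⟨v, hv⟩ := this
  set e : Hπ := ‖v‖⁻¹ • v with he_def
  have he : ‖e‖ = 1 := norm_smul_inv_norm hv
  have hee : ⟪e, e⟫_ℂ = 1 := by
    rw [inner_self_eq_norm_sq_to_K, he]; norm_num
  have he0 : e ≠ 0 := by
    intro h; rw [h, norm_zero] at he; norm_num at he
  -- the rank one projection onto e and a preimage p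
  set P : Hπ →L[ℂ] Hπ := (innerSL ℂ e).smulRight e with hP_def
  have hPapp : ∀ x, P x = ⟪e, x⟫_ℂ • e := fun x => rfl
  obtain ⟨p, hp⟩ := hπsurj P
  set lam : A → ℂ := fun a => ⟪e, π a e⟫_ℂ with hlam_def
  -- algebraic identities under π
  have hpp : π (p * p) = π p := by
    rw [map_mul, hp]
    ext x
    simp [ContinuousLinearMap.mul_apply, hPapp, inner_smul_right, hee, he]
  have hpstar : π (star p) = π p := by
    rw [map_star, hp]
    rw [ContinuousLinearMap.star_eq_adjoint]
    refine ((ContinuousLinearMap.eq_adjoint_iff P P).mpr ?_).symm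
    intro x y
    simp [hPapp, inner_smul_left, inner_smul_right, mul_comm, inner_conj_symm]
  have hpap : ∀ a, π (p * a * p) = lam a • π p := by
    intro a
    rw [map_mul, map_mul, hp]
    ext x
    simp [ContinuousLinearMap.mul_apply, hPapp, inner_smul_right, smul_smul, mul_comm,
      ContinuousLinearMap.smul_apply, hlam_def]
  -- transferred to τ
  have hτpp : τ p * τ p = τ p := by rw [← map_mul]; exact hτeq _ _ hpp
  have hτpstar : star (τ p) = τ p := by rw [← map_star]; exact hτeq _ _ hpstar
  have hτpap : ∀ a, τ p * τ a * τ p = lam a • τ p := by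
    intro a
    rw [← map_mul, ← map_mul]
    have h1 : π (p * a * p) = π (lam a • p) := by rw [map_smul, hpap]
    have := hτeq _ _ h1
    rw [map_smul] at this; exact this
  -- τ p is nonzero
  have hτp_ne : τ p ≠ 0 := by
    intro h0
    obtain ⟨c, hc⟩ := hτne
    let b := stdOrthonormalBasis ℂ Hπ
    have hS : ∀ i, ∃ s, π s = (innerSL ℂ e).smulRight (π c (b i)) := fun i => hπsurj _
    have hT : ∀ i, ∃ t, π t = (innerSL ℂ (b i)).smulRight e := fun i => hπsurj _
    choose s hs using hS
    choose t ht using hT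
    have hsum : π (∑ i, s i * p * t i) = π c := by
      rw [map_sum]
      ext x
      rw [ContinuousLinearMap.sum_apply]
      have key : ∀ i, π (s i * p * t i) x = ⟪b i, x⟫_ℂ • π c (b i) := by
        intro i
        rw [map_mul, map_mul, hs, hp, ht]
        simp [ContinuousLinearMap.mul_apply, hPapp, inner_smul_right, hee, he, smul_smul,
          ContinuousLinearMap.smulRight_apply]
      rw [Finset.sum_congr rfl (fun i _ => key i)]
      calc ∑ i, ⟪b i, x⟫_ℂ • π c (b i) = π c (∑ i, ⟪b i, x⟫_ℂ • b i) := by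
            rw [map_sum]; simp [map_smul]
        _ = π c x := by rw [b.sum_repr' x]
    apply hc
    have h2 : τ c = τ (∑ i, s i * p * t i) := (hτeq _ _ hsum).symm
    rw [h2, map_sum]
    apply Finset.sum_eq_zero
    intro i _
    rw [map_mul, map_mul, h0, mul_zero, zero_mul]
  -- a unit vector f fixed by τ p
  have : ∃ y, τ p y ≠ 0 := by
    by_contra h
    push_neg at h
    exact hτp_ne (ContinuousLinearMap.ext fun y => h y)
  obtain ⟨y, hy⟩ := this
  set g : Hτ := τ p y with hg_def
  have hgg : τ p g = g := by
    have := congrArg (fun T : Hτ →L[ℂ] Hτ => T y) hτpp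
    simpa [ContinuousLinearMap.mul_apply] using this
  set f : Hτ := ‖g‖⁻¹ • g with hf_def
  have hf1 : ‖f‖ = 1 := norm_smul_inv_norm hy
  have hff : ⟪f, f⟫_ℂ = 1 := by rw [inner_self_eq_norm_sq_to_K, hf1]; norm_num
  have hpf : τ p f = f := by
    rw [hf_def, ContinuousLinearMap.map_smul_of_tower, hgg]
  -- adjoint transfer lemmas
  have hτadj : ∀ (a : A) (u : Hτ) (w : Hτ), ⟪τ a u, w⟫_ℂ = ⟪u, τ (star a) w⟫_ℂ := by
    intro a u w
    rw [map_star, ContinuousLinearMap.star_eq_adjoint]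
    exact (ContinuousLinearMap.adjoint_inner_right (τ a) u w).symm
  have hπadj : ∀ (a : A) (u w : Hπ), ⟪π a u, w⟫_ℂ = ⟪u, π (star a) w⟫_ℂ := by
    intro a u w
    rw [map_star, ContinuousLinearMap.star_eq_adjoint]
    exact (ContinuousLinearMap.adjoint_inner_right (π a) u w).symm
  -- the state identity
  have hstate : ∀ a, ⟪f, τ a f⟫_ℂ = ⟪e, π a e⟫_ℂ := by
    intro a
    have hmove : ∀ w : Hτ, ⟪τ p f, w⟫_ℂ = ⟪f, τ p w⟫_ℂ := by
      intro w
      have := hτadj p f w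
      rw [map_star, hτpstar] at this
      exact this
    calc ⟪f, τ a f⟫_ℂ = ⟪τ p f, τ a (τ p f)⟫_ℂ := by rw [hpf]
      _ = ⟪f, τ p (τ a (τ p f))⟫_ℂ := hmove _
      _ = ⟪f, (τ p * τ a * τ p) f⟫_ℂ := by simp [ContinuousLinearMap.mul_apply]
      _ = ⟪f, (lam a • τ p) f⟫_ℂ := by rw [hτpap a]
      _ = lam a * ⟪f, τ p f⟫_ℂ := by
          simp [ContinuousLinearMap.smul_apply, inner_smul_right]
      _ = lam a := by rw [hpf, hff, mul_one]
  -- the main inner product identity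
  have hinner : ∀ a b : A, ⟪τ a f, τ b f⟫_ℂ = ⟪π a e, π b e⟫_ℂ := by
    intro a b
    calc ⟪τ a f, τ b f⟫_ℂ = ⟪f, τ (star a) (τ b f)⟫_ℂ := hτadj a f _
      _ = ⟪f, τ (star a * b) f⟫_ℂ := by rw [map_mul]; rfl
      _ = ⟪e, π (star a * b) e⟫_ℂ := hstate _
      _ = ⟪e, π (star a) (π b e)⟫_ℂ := by rw [map_mul]; rfl
      _ = ⟪π a e, π b e⟫_ℂ := (hπadj a e _).symm
  -- the orbit maps
  let L : A →ₗ[ℂ] Hπ :=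
    { toFun := fun a => π a e
      map_add' := fun a b => by simp [map_add]
      map_smul' := fun c a => by simp [map_smul] }
  let M : A →ₗ[ℂ] Hτ :=
    { toFun := fun a => τ a f
      map_add' := fun a b => by simp [map_add]
      map_smul' := fun c a => by simp [map_smul] }
  have hLapp : ∀ a, L a = π a e := fun a => rfl
  have hMapp : ∀ a, M a = τ a f := fun a => rfl
  -- surjectivity of the orbit maps
  have hLsurj : Function.Surjective L := by
    have hcl : IsClosed ((LinearMap.range L : Submodule ℂ Hπ) : Set Hπ) :=
      Submodule.closed_of_finiteDimensional _
    have hinv : ∀ a, ∀ x ∈ LinearMap.range L, π a x ∈ LinearMap.range L := by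
      intro a x hx
      obtain ⟨b, rfl⟩ := hx
      exact ⟨a * b, by rw [hLapp, hLapp, map_mul]; rfl⟩
    rcases hπirr _ hcl hinv with h | h
    · exfalso
      have : L 1 ∈ LinearMap.range L := ⟨1, rfl⟩
      rw [h] at this
      have : L 1 = 0 := this
      rw [hLapp, map_one] at this
      exact he0 this
    · exact LinearMap.range_eq_top.mp h
  have hMsurj : Function.Surjective M := by
    have hcl : IsClosed ((LinearMap.range M : Submodule ℂ Hτ) : Set Hτ) :=
      Submodule.closed_of_finiteDimensional _
    have hinv : ∀ a, ∀ x ∈ LinearMap.range M, τ a x ∈ LinearMap.range M := by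
      intro a x hx
      obtain ⟨b, rfl⟩ := hx
      exact ⟨a * b, by rw [hMapp, hMapp, map_mul]; rfl⟩
    rcases hτirr _ hcl hinv with h | h
    · exfalso
      have : M 1 ∈ LinearMap.range M := ⟨1, rfl⟩
      rw [h] at this
      have : M 1 = 0 := this
      rw [hMapp, map_one] at this
      rw [ContinuousLinearMap.one_apply] at this
      rw [this, norm_zero] at hf1; norm_num at hf1
    · exact LinearMap.range_eq_top.mp h
  -- equality of kernels
  have hkerLM : ∀ a, L a = 0 ↔ M a = 0 := by
    intro a
    rw [← inner_self_eq_zero (𝕜 := ℂ) (x := L a), ← inner_self_eq_zero (𝕜 := ℂ) (x := M a)]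
    rw [hLapp, hMapp, hinner a a]
  -- build the quotient equivalences
  have hle1 : LinearMap.ker L ≤ LinearMap.ker M := by
    intro a ha; exact (hkerLM a).mp ha
  have hle2 : LinearMap.ker M ≤ LinearMap.ker L := by
    intro a ha; exact (hkerLM a).mpr ha
  let Lbar := (LinearMap.ker L).liftQ L le_rfl
  let Mbar := (LinearMap.ker L).liftQ M hle1
  have hLbar : ∀ a : A, Lbar (Submodule.Quotient.mk a) = L a := fun a => rfl
  have hMbar : ∀ a : A, Mbar (Submodule.Quotient.mk a) = M a := fun a => rfl
  have hLbar_bij : Function.Bijective Lbar := by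
    constructor
    · rw [← LinearMap.ker_eq_bot]
      exact Submodule.ker_liftQ_eq_bot _ _ _ le_rfl
    · intro x
      obtain ⟨a, rfl⟩ := hLsurj x
      exact ⟨Submodule.Quotient.mk a, rfl⟩
  have hMbar_bij : Function.Bijective Mbar := by
    constructor
    · rw [← LinearMap.ker_eq_bot]
      exact Submodule.ker_liftQ_eq_bot _ _ _ hle2
    · intro x
      obtain ⟨a, rfl⟩ := hMsurj x
      exact ⟨Submodule.Quotient.mk a, rfl⟩
  let eL : (A ⧸ LinearMap.ker L) ≃ₗ[ℂ] Hπ := LinearEquiv.ofBijective Lbar hLbar_bij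
  let eM : (A ⧸ LinearMap.ker L) ≃ₗ[ℂ] Hτ := LinearEquiv.ofBijective Mbar hMbar_bij
  let U₀ : Hπ ≃ₗ[ℂ] Hτ := eL.symm.trans eM
  have hU₀ : ∀ a : A, U₀ (L a) = M a := by
    intro a
    have h1 : eL (Submodule.Quotient.mk a) = L a := rfl
    have h2 : eL.symm (L a) = Submodule.Quotient.mk a := by
      rw [← h1, LinearEquiv.symm_apply_apply]
    show eM (eL.symm (L a)) = M a
    rw [h2]; rfl
  have hU₀inner : ∀ x y : Hπ, ⟪U₀ x, U₀ y⟫_ℂ = ⟪x, y⟫_ℂ := by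
    intro x y
    obtain ⟨a, rfl⟩ := hLsurj x
    obtain ⟨b, rfl⟩ := hLsurj y
    rw [hU₀, hU₀, hLapp, hLapp, hMapp, hMapp]
    exact hinner a b
  refine ⟨U₀.isometryOfInner hU₀inner, ?_⟩
  intro a x
  obtain ⟨b, rfl⟩ := hLsurj x
  have h1 : π a (L b) = L (a * b) := by rw [hLapp, hLapp, map_mul]; rfl
  rw [h1]
  simp only [LinearEquiv.coe_isometryOfInner]
  rw [hU₀, hU₀, hMapp, hMapp, map_mul]
  rfl
end

section
/- Suppose T is a bounded linear operator on L²(Y, H, μ) that commutes with M(φ) for every φ ∈ C₀(X), i.e., T M(φ) = M(φ) T for all φ ∈ C₀(X). Then T commutes with every diagonal operator: T L_ψ = L_ψ T for every bounded Borel function ψ : Y → ℂ. -/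
open MeasureTheory Set Filter Topology ENNReal NNReal

local notation "⟪" x ", " y "⟫" => @inner ℂ _ _ x y

/-- Existence of the multiplication (diagonal) operator on `L²` associated to a bounded
a.e. strongly measurable scalar function. -/
private lemma exists_smul_op {Y H : Type} [MeasurableSpace Y] [NormedAddCommGroup H]
    [InnerProductSpace ℂ H] (μ : Measure Y) (g : Y → ℂ) (hg : AEStronglyMeasurable g μ)
    (C : ℝ) (hbd : ∀ y, ‖g y‖ ≤ C) :
    ∃ L : Lp H 2 μ →L[ℂ] Lp H 2 μ,
      ∀ f : Lp H 2 μ, (L f : Y → H) =ᵐ[μ] fun y => g y • (f : Y → H) y := by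
  have hC0 : (0 : ℝ) ≤ max C 0 := le_max_right _ _
  have hbd' : ∀ y, ‖g y‖ ≤ max C 0 := fun y => (hbd y).trans (le_max_left _ _)
  have hgmem : MemLp g ⊤ μ := memLp_top_of_bound hg (max C 0) (Eventually.of_forall hbd')
  have mem : ∀ f : Lp H 2 μ, MemLp (fun y => g y • (f : Y → H) y) 2 μ := fun f =>
    by have := (Lp.memLp f).smul (r := 2) hgmem; exact this
  set L0 : Lp H 2 μ → Lp H 2 μ := fun f => (mem f).toLp _ with hL0
  have hcoe : ∀ f, (L0 f : Y → H) =ᵐ[μ] fun y => g y • (f : Y → H) y := fun f =>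
    (mem f).coeFn_toLp
  have hbound : ∀ f, ‖L0 f‖ ≤ max C 0 * ‖f‖ := by
    intro f
    have h1 : eLpNorm (fun y => g y • (f : Y → H) y) 2 μ ≤
        eLpNorm ((max C 0 : ℝ) • (f : Y → H)) 2 μ := by
      refine eLpNorm_mono_ae (Eventually.of_forall fun y => ?_)
      show ‖g y • (f : Y → H) y‖ ≤ ‖(max C 0 : ℝ) • (f : Y → H) y‖
      rw [norm_smul, norm_smul, Real.norm_eq_abs, abs_of_nonneg hC0]
      exact mul_le_mul_of_nonneg_right (hbd' y) (norm_nonneg _)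
    have h2 : eLpNorm ((max C 0 : ℝ) • (f : Y → H)) 2 μ =
        ‖(max C 0 : ℝ)‖₊ * eLpNorm (f : Y → H) 2 μ := eLpNorm_const_smul _ _ _ _
    calc ‖L0 f‖ = (eLpNorm (fun y => g y • (f : Y → H) y) 2 μ).toReal := Lp.norm_toLp _ _
      _ ≤ ((‖(max C 0 : ℝ)‖₊ : ℝ≥0∞) * eLpNorm (f : Y → H) 2 μ).toReal := by
          refine ENNReal.toReal_mono ?_ (h1.trans_eq h2)
          exact ENNReal.mul_ne_top ENNReal.coe_ne_top (Lp.eLpNorm_ne_top f)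
      _ = max C 0 * ‖f‖ := by
          rw [ENNReal.toReal_mul, Lp.norm_def]
          congr 1
          simp [Real.norm_eq_abs, abs_of_nonneg hC0]
  have hadd : ∀ f₁ f₂, L0 (f₁ + f₂) = L0 f₁ + L0 f₂ := by
    intro f₁ f₂
    apply Lp.ext
    filter_upwards [hcoe (f₁ + f₂), hcoe f₁, hcoe f₂, Lp.coeFn_add f₁ f₂,
      Lp.coeFn_add (L0 f₁) (L0 f₂)] with y h0 h1 h2 h3 h4
    rw [h0, h4, h3]
    show g y • ((f₁ : Y → H) y + (f₂ : Y → H) y) = (L0 f₁ : Y → H) y + (L0 f₂ : Y → H) y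
    rw [smul_add, h1, h2]
  have hsmul : ∀ (c : ℂ) (f : Lp H 2 μ), L0 (c • f) = c • L0 f := by
    intro c f
    apply Lp.ext
    filter_upwards [hcoe (c • f), hcoe f, Lp.coeFn_smul c f,
      Lp.coeFn_smul c (L0 f)] with y h0 h1 h2 h3
    rw [h0, h3, h2]
    show g y • (c • (f : Y → H) y) = c • (L0 f : Y → H) y
    rw [h1, smul_comm]
  let L1 : Lp H 2 μ →ₗ[ℂ] Lp H 2 μ :=
    { toFun := L0, map_add' := hadd, map_smul' := hsmul }
  exact ⟨LinearMap.mkContinuous L1 (max C 0) hbound, hcoe⟩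

/-- Every Borel subset of `Y` is the preimage under `i` of a Borel subset of `X`,
when `i` is continuous and injective, `Y` is σ-compact and `X` is Hausdorff. -/
private lemma exists_borel_preimage {X Y : Type} [TopologicalSpace X] [T2Space X]
    [TopologicalSpace Y] [SecondCountableTopology Y] [LocallyCompactSpace Y] [T2Space Y]
    [MeasurableSpace Y] [BorelSpace Y]
    (i : Y → X) (hi : Continuous i) (hinj : Function.Injective i)
    (E : Set Y) (hE : MeasurableSet E) :
    ∃ B : Set X, MeasurableSet[borel X] B ∧ i ⁻¹' B = E := by
  have hYeq : ‹MeasurableSpace Y› = borel Y := BorelSpace.measurable_eq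
  letI mX : MeasurableSpace X := borel X
  haveI : BorelSpace X := ⟨rfl⟩
  have key : ∀ n : ℕ, ∀ E : Set Y, MeasurableSet E →
      MeasurableSet (i '' (E ∩ compactCovering Y n)) := by
    intro n
    set K : Set Y := compactCovering Y n with hK
    have hKc : IsCompact K := isCompact_compactCovering Y n
    have himgK : MeasurableSet (i '' K) := (hKc.image hi).isClosed.measurableSet
    have himg : ∀ s : Set Y, IsClosed s → MeasurableSet (i '' (s ∩ K)) := fun s hs =>
      ((hKc.inter_left hs).image hi).isClosed.measurableSet
    let m : MeasurableSpace Y :=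
      { MeasurableSet' := fun E =>
          MeasurableSet (i '' (E ∩ K)) ∧ MeasurableSet (i '' (Eᶜ ∩ K))
        measurableSet_empty := by
          constructor
          · simp
          · simpa using himg univ isClosed_univ
        measurableSet_compl := by
          intro E hE
          exact ⟨hE.2, by simpa [compl_compl] using hE.1⟩
        measurableSet_iUnion := by
          intro f hf
          constructor
          · rw [iUnion_inter, image_iUnion]
            exact MeasurableSet.iUnion fun j => (hf j).1
          · rw [compl_iUnion, iInter_inter]
            rw [(hinj.injOn).image_iInter_eq]
            exact MeasurableSet.iInter fun j => (hf j).2 }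
    have hle : (borel Y : MeasurableSpace Y) ≤ m := by
      refine MeasurableSpace.generateFrom_le fun s hs => ?_
      have hs' : IsOpen s := hs
      refine ⟨?_, himg _ hs'.isClosed_compl⟩
      have hdecomp : s ∩ K = K \ (sᶜ ∩ K) := by
        ext y; by_cases hy : y ∈ s <;> simp [hy]
      rw [hdecomp, Set.image_diff hinj]
      exact himgK.diff (himg _ hs'.isClosed_compl)
    intro E hE
    have hE' : MeasurableSet[borel Y] E := hYeq ▸ hE
    exact (hle E hE').1
  refine ⟨i '' E, ?_, Set.preimage_image_eq E hinj⟩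
  have : i '' E = ⋃ n, i '' (E ∩ compactCovering Y n) := by
    rw [← image_iUnion, ← inter_iUnion, iUnion_compactCovering, inter_univ]
  rw [this]
  exact MeasurableSet.iUnion fun n => key n E hE

/-- If a bounded operator `T` on `L²(Y,H,μ)` commutes with the multiplication
operator `M(φ)` for every `φ ∈ C₀(X)`, then `T` commutes with every diagonal operator
`L_ψ` for `ψ : Y → ℂ` bounded Borel. -/
theorem commutant_of_multiplication_ops_commutes_with_diagonal_ops
    {X Y H : Type} [TopologicalSpace X] [LocallyCompactSpace X] [T2Space X]
    [TopologicalSpace Y] [SecondCountableTopology Y] [LocallyCompactSpace Y] [T2Space Y]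
    [MeasurableSpace Y] [BorelSpace Y]
    (μ : Measure Y) [μ.Regular]
    [NormedAddCommGroup H] [InnerProductSpace ℂ H] [CompleteSpace H]
    [TopologicalSpace.SeparableSpace H]
    (i : Y → X) (hi : Continuous i) (hinj : Function.Injective i)
    (T : Lp H 2 μ →L[ℂ] Lp H 2 μ)
    (hT : ∀ (φ : ZeroAtInftyContinuousMap X ℂ) (Mφ : Lp H 2 μ →L[ℂ] Lp H 2 μ),
      (∀ f : Lp H 2 μ, (Mφ f : Y → H) =ᵐ[μ] fun y => φ (i y) • (f : Y → H) y) →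
      T ∘L Mφ = Mφ ∘L T)
    (ψ : Y → ℂ) (hψ : Measurable ψ) (hbd : ∃ C : ℝ, ∀ y : Y, ‖ψ y‖ ≤ C)
    (Lψ : Lp H 2 μ →L[ℂ] Lp H 2 μ)
    (hLψ : ∀ f : Lp H 2 μ, (Lψ f : Y → H) =ᵐ[μ] fun y => ψ y • (f : Y → H) y) :
    T ∘L Lψ = Lψ ∘L T := by
  letI mX : MeasurableSpace X := borel X
  haveI : BorelSpace X := ⟨rfl⟩
  have hmi : Measurable i := hi.measurable
  obtain ⟨C₀, hC₀⟩ := hbd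
  refine ContinuousLinearMap.ext fun f => ?_
  simp only [ContinuousLinearMap.comp_apply]
  refine ext_inner_left ℂ fun g => ?_
  set a : Lp H 2 μ := ContinuousLinearMap.adjoint T g with ha
  set b : Lp H 2 μ := T f with hb
  set p : Y → ℂ := fun y => ⟪(a : Y → H) y, (f : Y → H) y⟫ with hp'
  set q : Y → ℂ := fun y => ⟪(g : Y → H) y, (b : Y → H) y⟫ with hq'
  have hp : Integrable p μ := L2.integrable_inner a f
  have hq : Integrable q μ := L2.integrable_inner g b
  have hpq : Integrable (fun y => p y - q y) μ := hp.sub hq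
  -- inner product of `u` against a diagonal image
  have hinner : ∀ (u v w : Lp H 2 μ) (s : Y → ℂ),
      ((w : Y → H) =ᵐ[μ] fun y => s y • (v : Y → H) y) →
      ⟪u, w⟫ = ∫ y, s y * ⟪(u : Y → H) y, (v : Y → H) y⟫ ∂μ := by
    intro u v w s hw
    rw [L2.inner_def]
    refine integral_congr_ae ?_
    filter_upwards [hw] with y hy
    rw [hy, inner_smul_right]
  -- Claim A: the commutation hypothesis in integral form
  have claimA : ∀ φ : ZeroAtInftyContinuousMap X ℂ,
      ∫ y, φ (i y) * (p y - q y) ∂μ = 0 := by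
    intro φ
    have hφc : Continuous fun y => φ (i y) := (map_continuous φ).comp hi
    have hφbd : ∀ y, ‖φ (i y)‖ ≤ ‖φ.toBCF‖ := fun y =>
      BoundedContinuousFunction.norm_coe_le_norm φ.toBCF (i y)
    obtain ⟨L, hL⟩ := exists_smul_op (H := H) μ (fun y => φ (i y)) hφc.aestronglyMeasurable _ hφbd
    have hcomm : T (L f) = L (T f) := by
      have := hT φ L hL
      have h2 := ContinuousLinearMap.ext_iff.mp this f
      simpa using h2
    have h1 : ⟪g, T (L f)⟫ = ∫ y, φ (i y) * p y ∂μ := by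
      have hadj : ⟪g, T (L f)⟫ = ⟪a, L f⟫ :=
        (ContinuousLinearMap.adjoint_inner_left T (L f) g).symm
      rw [hadj]
      exact hinner a f (L f) _ (hL f)
    have h2 : ⟪g, L (T f)⟫ = ∫ y, φ (i y) * q y ∂μ := hinner g b (L b) _ (hL b)
    have h12 : ∫ y, φ (i y) * p y ∂μ = ∫ y, φ (i y) * q y ∂μ := by
      rw [← h1, ← h2, hcomm]
    have int1 : Integrable (fun y => φ (i y) * p y) μ :=
      hp.bdd_mul hφc.aestronglyMeasurable (Eventually.of_forall hφbd)
    have int2 : Integrable (fun y => φ (i y) * q y) μ :=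
      hq.bdd_mul hφc.aestronglyMeasurable (Eventually.of_forall hφbd)
    have : ∫ y, (φ (i y) * p y - φ (i y) * q y) ∂μ = 0 := by
      rw [integral_sub int1 int2, h12, sub_self]
    simpa [mul_sub] using this
  -- Claim B: vanishing on preimages of open sets
  have claimU : ∀ U : Set X, IsOpen U → ∫ y in i ⁻¹' U, (p y - q y) ∂μ = 0 := by
    intro U hU
    set S : Set Y := i ⁻¹' U with hS
    have hSopen : IsOpen S := hU.preimage hi
    haveI := hSopen.locallyCompactSpace
    set Cn : ℕ → Set Y := fun n => (Subtype.val '' (compactCovering S n) : Set Y) with hCn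
    have hCcomp : ∀ n, IsCompact (Cn n) := fun n =>
      (isCompact_compactCovering _ n).image continuous_subtype_val
    have hCsub : ∀ n, Cn n ⊆ S := by
      rintro n y ⟨z, _, rfl⟩; exact z.2
    have hCmono : Monotone Cn := fun m n h =>
      image_mono (compactCovering_subset _ h)
    have hCunion : ⋃ n, Cn n = S := by
      rw [← image_iUnion, iUnion_compactCovering, image_univ, Subtype.range_coe]
    have hsep : ∀ n, ∃ fr : C(X, ℝ), EqOn fr 1 (i '' Cn n) ∧ EqOn fr 0 Uᶜ ∧
        HasCompactSupport fr ∧ ∀ x, fr x ∈ Icc (0 : ℝ) 1 := by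
      intro n
      refine exists_continuous_one_zero_of_isCompact ((hCcomp n).image hi)
        hU.isClosed_compl ?_
      refine Set.disjoint_left.mpr ?_
      rintro x ⟨y, hy, rfl⟩ hxc
      exact hxc (hCsub n hy)
    choose fr hfr1 hfr0 hfrc hfr01 using hsep
    set Φ : ℕ → ZeroAtInftyContinuousMap X ℂ := fun n =>
      { toFun := fun x => ((fr n x : ℝ) : ℂ)
        continuous_toFun := Complex.continuous_ofReal.comp (fr n).continuous
        zero_at_infty' := by
          have h0 : Tendsto (fr n) (cocompact X) (𝓝 0) := (hfrc n).is_zero_at_infty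
          have := (Complex.continuous_ofReal.tendsto (0 : ℝ)).comp h0
          simpa [Function.comp_def] using this } with hΦ
    have happ : ∀ n x, (Φ n) x = ((fr n x : ℝ) : ℂ) := fun n x => rfl
    have hA : ∀ n, ∫ y, (Φ n) (i y) * (p y - q y) ∂μ = 0 := fun n => claimA (Φ n)
    have hlim : Tendsto (fun n => ∫ y, (Φ n) (i y) * (p y - q y) ∂μ) atTop
        (𝓝 (∫ y in S, (p y - q y) ∂μ)) := by
      rw [← integral_indicator hSopen.measurableSet]
      refine tendsto_integral_of_dominated_convergence (fun y => ‖p y - q y‖)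
        (fun n => (((map_continuous (Φ n)).comp hi).aestronglyMeasurable).mul
          hpq.aestronglyMeasurable)
        hpq.norm (fun n => Eventually.of_forall fun y => ?_)
        (Eventually.of_forall fun y => ?_)
      · have h01 := hfr01 n (i y)
        have : ‖(Φ n) (i y)‖ ≤ 1 := by
          rw [happ, Complex.norm_real, Real.norm_eq_abs, abs_of_nonneg h01.1]
          exact h01.2
        calc ‖(Φ n) (i y) * (p y - q y)‖ = ‖(Φ n) (i y)‖ * ‖p y - q y‖ := norm_mul _ _
          _ ≤ 1 * ‖p y - q y‖ := mul_le_mul_of_nonneg_right this (norm_nonneg _)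
          _ = ‖p y - q y‖ := one_mul _
      · by_cases hy : y ∈ S
        · obtain ⟨N, hN⟩ : ∃ N, y ∈ Cn N := by
            have : y ∈ ⋃ n, Cn n := hCunion.symm ▸ hy
            exact mem_iUnion.mp this
          rw [indicator_of_mem hy]
          refine tendsto_atTop_of_eventually_const (i₀ := N) fun n hn => ?_
          have hmem : i y ∈ i '' Cn n := mem_image_of_mem i (hCmono hn hN)
          have : fr n (i y) = 1 := hfr1 n hmem
          rw [happ, this]
          simp
        · rw [indicator_of_notMem hy]
          have : ∀ n, (Φ n) (i y) = 0 := by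
            intro n
            have : fr n (i y) = 0 := hfr0 n (by simpa [hS] using hy)
            rw [happ, this]
            simp
          simpa [this] using (tendsto_const_nhds :
            Tendsto (fun _ : ℕ => (0 : ℂ)) atTop (𝓝 0))
    have h0 : Tendsto (fun n => ∫ y, (Φ n) (i y) * (p y - q y) ∂μ) atTop (𝓝 0) := by
      simpa [hA] using (tendsto_const_nhds : Tendsto (fun _ : ℕ => (0 : ℂ)) atTop (𝓝 0))
    exact (tendsto_nhds_unique h0 hlim).symm
  -- Claim C: vanishing on preimages of all Borel sets of X
  have claimB : ∀ B : Set X, MeasurableSet B → ∫ y in i ⁻¹' B, (p y - q y) ∂μ = 0 := by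
    have htot : ∫ y, (p y - q y) ∂μ = 0 := by
      have := claimU univ isOpen_univ
      simpa using this
    refine MeasurableSpace.induction_on_inter (m := mX)
      (C := fun B _ => ∫ y in i ⁻¹' B, (p y - q y) ∂μ = 0)
      (s := {s : Set X | IsOpen s}) rfl ?_ (by simp) (fun U hU => claimU U hU) ?_ ?_
    · intro s hs t ht _
      exact hs.inter ht
    · intro B hBmeas hB0
      have hiB : MeasurableSet (i ⁻¹' B) := hmi hBmeas
      replace hB0 : ∫ y in i ⁻¹' B, (p y - q y) ∂μ = 0 := hB0
      have hsum := integral_add_compl hiB hpq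
      show ∫ y in i ⁻¹' Bᶜ, (p y - q y) ∂μ = 0
      rw [preimage_compl]
      rw [hB0, zero_add] at hsum
      rw [hsum, htot]
    · intro s hdisj hmeas h0
      have h0' : ∀ n, ∫ y in i ⁻¹' s n, (p y - q y) ∂μ = 0 := h0
      show ∫ y in i ⁻¹' (⋃ n, s n), (p y - q y) ∂μ = 0
      rw [preimage_iUnion, integral_iUnion (fun n => hmi (hmeas n))
        (fun m n hmn => (hdisj hmn).preimage i) (hpq.integrableOn)]
      simp [h0']
  -- conclude that p - q vanishes a.e.
  have hae : (fun y => p y - q y) =ᵐ[μ] 0 := by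
    refine ae_eq_zero_of_forall_setIntegral_eq_of_sigmaFinite
      (fun s hs _ => hpq.integrableOn) (fun s hs _ => ?_)
    obtain ⟨B, hBmeas, hBE⟩ := exists_borel_preimage i hi hinj s hs
    rw [← hBE]
    exact claimB B hBmeas
  -- final computation
  have e1 : ⟪g, T (Lψ f)⟫ = ∫ y, ψ y * p y ∂μ := by
    have hadj : ⟪g, T (Lψ f)⟫ = ⟪a, Lψ f⟫ :=
      (ContinuousLinearMap.adjoint_inner_left T (Lψ f) g).symm
    rw [hadj]
    exact hinner a f (Lψ f) _ (hLψ f)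
  have e2 : ⟪g, Lψ (T f)⟫ = ∫ y, ψ y * q y ∂μ := hinner g b (Lψ b) _ (hLψ b)
  rw [e1, e2]
  have intp : Integrable (fun y => ψ y * p y) μ :=
    hp.bdd_mul hψ.aestronglyMeasurable (Eventually.of_forall hC₀)
  have intq : Integrable (fun y => ψ y * q y) μ :=
    hq.bdd_mul hψ.aestronglyMeasurable (Eventually.of_forall hC₀)
  have hzero : ∫ y, (ψ y * p y - ψ y * q y) ∂μ = 0 := by
    have heq : (fun y => ψ y * p y - ψ y * q y) =ᵐ[μ] 0 := by
      filter_upwards [hae] with y hy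
      have hy' : p y - q y = 0 := hy
      have hpq : p y = q y := sub_eq_zero.mp hy'
      simp [hpq]
    rw [integral_congr_ae heq]
    simp
  rw [integral_sub intp intq] at hzero
  exact sub_eq_zero.mp hzero
end

section
/- If i(Y) ∩ j(Z) = ∅, then the representations M_Y and M_Z of C₀(X) have no unitarily equivalent subrepresentations; that is, there do not exist a nonzero closed subspace E ⊆ L²(Y, H_Y, μ_Y) invariant under M_Y(φ) for all φ ∈ C₀(X), a nonzero closed subspace F ⊆ L²(Z, H_Z, μ_Z) invariant under M_Z(φ) for all φ ∈ C₀(X), and a unitary operator U : E → F satisfying U (M_Y(φ)e) = M_Z(φ)(U e) for all φ ∈ C₀(X) and e ∈ E. -/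
open MeasureTheory Filter Topology

private lemma my_norm_sq_eq_integral {α H : Type*} [MeasurableSpace α] {μ : Measure α}
    [NormedAddCommGroup H] [InnerProductSpace ℂ H] (g : Lp H 2 μ) :
    ‖g‖ ^ 2 = ∫ a, ‖(g : α → H) a‖ ^ 2 ∂μ := by
  have h1 : RCLike.re (inner ℂ g g) = ‖g‖ ^ 2 := @inner_self_eq_norm_sq ℂ _ _ _ _ g
  rw [← h1, L2.inner_def, ← integral_re (L2.integrable_inner g g)]
  exact integral_congr_ae (Filter.Eventually.of_forall fun a => inner_self_eq_norm_sq _)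

private lemma my_integrable_norm_sq {α H : Type*} [MeasurableSpace α] {μ : Measure α}
    [NormedAddCommGroup H] [InnerProductSpace ℂ H] (g : Lp H 2 μ) :
    Integrable (fun a => ‖(g : α → H) a‖ ^ 2) μ := by
  have := (Lp.memLp g).integrable_norm_rpow two_ne_zero ENNReal.ofNat_ne_top
  simpa [ENNReal.toReal_ofNat, Real.rpow_natCast] using this

/-- If `i(Y) ∩ j(Z) = ∅`, then the multiplication representations `M_Y` and
`M_Z` of `C₀(X)` on `L²(Y,H_Y,μ_Y)` and `L²(Z,H_Z,μ_Z)` have no unitarily equivalent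
subrepresentations. -/
theorem no_unitarily_equivalent_subrepresentations
    {X Y Z HY HZ : Type}
    [TopologicalSpace X] [SecondCountableTopology X] [LocallyCompactSpace X] [T2Space X]
    [TopologicalSpace Y] [SecondCountableTopology Y] [LocallyCompactSpace Y] [T2Space Y]
    [MeasurableSpace Y] [BorelSpace Y]
    [TopologicalSpace Z] [SecondCountableTopology Z] [LocallyCompactSpace Z] [T2Space Z]
    [MeasurableSpace Z] [BorelSpace Z]
    (μY : Measure Y) [μY.Regular] (μZ : Measure Z) [μZ.Regular]
    [NormedAddCommGroup HY] [InnerProductSpace ℂ HY] [CompleteSpace HY]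
    [TopologicalSpace.SeparableSpace HY]
    [NormedAddCommGroup HZ] [InnerProductSpace ℂ HZ] [CompleteSpace HZ]
    [TopologicalSpace.SeparableSpace HZ]
    (i : Y → X) (hic : Continuous i) (hii : Function.Injective i)
    (j : Z → X) (hjc : Continuous j) (hji : Function.Injective j)
    (hdisj : Set.range i ∩ Set.range j = ∅)
    (MY : ZeroAtInftyContinuousMap X ℂ → (Lp HY 2 μY →L[ℂ] Lp HY 2 μY))
    (hMY : ∀ (φ : ZeroAtInftyContinuousMap X ℂ) (f : Lp HY 2 μY),
      (MY φ f : Y → HY) =ᵐ[μY] fun y => φ (i y) • (f : Y → HY) y)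
    (MZ : ZeroAtInftyContinuousMap X ℂ → (Lp HZ 2 μZ →L[ℂ] Lp HZ 2 μZ))
    (hMZ : ∀ (φ : ZeroAtInftyContinuousMap X ℂ) (g : Lp HZ 2 μZ),
      (MZ φ g : Z → HZ) =ᵐ[μZ] fun z => φ (j z) • (g : Z → HZ) z) :
    ¬ ∃ (E : Submodule ℂ (Lp HY 2 μY)) (F : Submodule ℂ (Lp HZ 2 μZ)),
      E ≠ ⊥ ∧ F ≠ ⊥ ∧ IsClosed (E : Set (Lp HY 2 μY)) ∧ IsClosed (F : Set (Lp HZ 2 μZ)) ∧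
      ∃ (hE : ∀ (φ : ZeroAtInftyContinuousMap X ℂ), ∀ e ∈ E, MY φ e ∈ E)
        (_hF : ∀ (φ : ZeroAtInftyContinuousMap X ℂ), ∀ g ∈ F, MZ φ g ∈ F)
        (U : E ≃ₗᵢ[ℂ] F),
        ∀ (φ : ZeroAtInftyContinuousMap X ℂ) (e : E),
          (U ⟨MY φ (e : Lp HY 2 μY), hE φ e e.2⟩ : Lp HZ 2 μZ)
            = MZ φ (U e : Lp HZ 2 μZ) := by
  rintro ⟨E, F, hEbot, hFbot, hEcl, hFcl, hE, hF, U, hU⟩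
  -- pick a nonzero element of E
  obtain ⟨e0, he0E, he0⟩ := Submodule.exists_mem_ne_zero_of_ne_bot hEbot
  set eE : E := ⟨e0, he0E⟩ with heE
  set fLp : Lp HZ 2 μZ := (U eE : Lp HZ 2 μZ) with hfLp
  -- key: equality of norms
  have key : ∀ φ : ZeroAtInftyContinuousMap X ℂ, ‖MY φ e0‖ = ‖MZ φ fLp‖ := by
    intro φ
    have h := hU φ eE
    calc ‖MY φ e0‖ = ‖(⟨MY φ e0, hE φ e0 he0E⟩ : E)‖ := rfl
      _ = ‖U ⟨MY φ e0, hE φ e0 he0E⟩‖ := (U.norm_map _).symm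
      _ = ‖((U ⟨MY φ e0, hE φ e0 he0E⟩ : F) : Lp HZ 2 μZ)‖ := rfl
      _ = ‖MZ φ fLp‖ := by rw [h]
  -- notation for a.e. representatives
  set eY : Y → HY := (e0 : Y → HY) with heY
  set fZ : Z → HZ := (fLp : Z → HZ) with hfZ
  -- find a compact K ⊆ Y carrying positive mass of ‖eY‖²
  have hIntY : Integrable (fun y => ‖eY y‖ ^ 2) μY := my_integrable_norm_sq e0
  have hpos : 0 < ∫ y, ‖eY y‖ ^ 2 ∂μY := by
    rw [← my_norm_sq_eq_integral e0]
    have : 0 < ‖e0‖ := norm_pos_iff.mpr he0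
    positivity
  have hmono : Tendsto (fun n => ∫ y in compactCovering Y n, ‖eY y‖ ^ 2 ∂μY) Filter.atTop
      (nhds (∫ y in ⋃ n, compactCovering Y n, ‖eY y‖ ^ 2 ∂μY)) := by
    refine tendsto_setIntegral_of_monotone (fun n => (isCompact_compactCovering Y n).measurableSet)
      (fun m n h => compactCovering_subset Y h) ?_
    rw [iUnion_compactCovering]
    exact hIntY.integrableOn
  rw [iUnion_compactCovering, Measure.restrict_univ] at hmono
  obtain ⟨n0, hn0⟩ := (hmono.eventually (eventually_gt_nhds hpos)).exists
  set K : Set Y := compactCovering Y n0 with hK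
  have hKc : IsCompact K := isCompact_compactCovering Y n0
  set c : ℝ := ∫ y in K, ‖eY y‖ ^ 2 ∂μY with hc
  have hcpos : 0 < c := hn0
  -- the compact set S := i '' K in X, disjoint from range j
  set S : Set X := i '' K with hS
  have hSc : IsCompact S := hKc.image hic
  have hScl : IsClosed S := hSc.isClosed
  have hSj : ∀ z : Z, j z ∉ S := by
    intro z hz
    have : j z ∈ Set.range i ∩ Set.range j :=
      ⟨⟨(Set.mem_image _ _ _).mp hz |>.choose, ((Set.mem_image _ _ _).mp hz).choose_spec.2⟩,
        ⟨z, rfl⟩⟩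
    rw [hdisj] at this
    exact this
  -- make X a metric space
  letI : MetricSpace X := TopologicalSpace.metrizableSpaceMetric X
  -- the shrinking open neighborhoods of S
  set V : ℕ → Set X := fun n => Metric.thickening (1 / (n + 1)) S with hV
  have hVopen : ∀ n, IsOpen (V n) := fun n => Metric.isOpen_thickening
  have hSV : ∀ n, S ⊆ V n := fun n => Metric.self_subset_thickening (by positivity) S
  have hIntZ : Integrable (fun z => ‖fZ z‖ ^ 2) μZ := my_integrable_norm_sq fLp
  -- the dominating sequence
  set B : ℕ → ℝ := fun n => ∫ z, (j ⁻¹' V n).indicator (fun z => ‖fZ z‖ ^ 2) z ∂μZ with hB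
  -- B n → 0
  have hBlim : Tendsto B Filter.atTop (nhds 0) := by
    have h0 : (0 : ℝ) = ∫ z, (0 : ℝ) ∂μZ := by simp
    rw [h0]
    refine tendsto_integral_of_dominated_convergence (fun z => ‖fZ z‖ ^ 2)
      (fun n => (hIntZ.indicator ((hVopen n).preimage hjc).measurableSet).aestronglyMeasurable)
      hIntZ ?_ ?_
    · intro n
      refine Filter.Eventually.of_forall fun z => ?_
      by_cases hz : z ∈ j ⁻¹' V n
      · rw [Set.indicator_of_mem hz]
        rw [Real.norm_of_nonneg (by positivity)]
      · rw [Set.indicator_of_notMem hz]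
        simp [sq_nonneg]
    · refine Filter.Eventually.of_forall fun z => ?_
      have hzS : j z ∉ closure S := by rw [hScl.closure_eq]; exact hSj z
      have hev := Metric.eventually_notMem_thickening_of_infEdist_pos hzS
      have hδ : Tendsto (fun n : ℕ => 1 / ((n : ℝ) + 1)) Filter.atTop (nhds 0) :=
        tendsto_one_div_add_atTop_nhds_zero_nat
      have : ∀ᶠ n in Filter.atTop, j z ∉ V n := hδ.eventually hev
      refine Filter.Tendsto.congr' ?_ tendsto_const_nhds
      filter_upwards [this] with n hn
      exact (Set.indicator_of_notMem (show z ∉ j ⁻¹' V n from hn) _).symm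
  -- main estimate: c ≤ B n for all n
  have hcB : ∀ n, c ≤ B n := by
    intro n
    -- Urysohn function
    obtain ⟨φ, hφ1, hφ0, hφsupp, hφ01⟩ :=
      exists_continuous_one_zero_of_isCompact hSc (hVopen n).isClosed_compl
        (Set.disjoint_compl_right_iff_subset.mpr (hSV n))
    -- package it as a C₀ function with values in ℂ
    set Φ : ZeroAtInftyContinuousMap X ℂ :=
      { toFun := fun x => (φ x : ℂ)
        continuous_toFun := Complex.continuous_ofReal.comp φ.continuous
        zero_at_infty' := (hφsupp.comp_left Complex.ofReal_zero).is_zero_at_infty } with hΦ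
    have hΦval : ∀ x, Φ x = (φ x : ℂ) := fun x => rfl
    have hΦnorm : ∀ x, ‖Φ x‖ ≤ 1 := by
      intro x
      rw [hΦval, Complex.norm_real, Real.norm_of_nonneg (hφ01 x).1]
      exact (hφ01 x).2
    -- integrability of auxiliary functions
    have hmeasY : AEStronglyMeasurable (fun y => ‖Φ (i y) • eY y‖ ^ 2) μY := by
      have h1 : AEStronglyMeasurable (fun y => Φ (i y) • eY y) μY :=
        ((Φ.continuous.comp hic).aestronglyMeasurable).smul (Lp.aestronglyMeasurable e0)
      exact (h1.norm.aemeasurable.pow_const 2).aestronglyMeasurable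
    have hIntΦY : Integrable (fun y => ‖Φ (i y) • eY y‖ ^ 2) μY := by
      refine hIntY.mono hmeasY (Filter.Eventually.of_forall fun y => ?_)
      rw [Real.norm_of_nonneg (by positivity), Real.norm_of_nonneg (by positivity)]
      have : ‖Φ (i y) • eY y‖ ≤ ‖eY y‖ := by
        rw [norm_smul]
        calc ‖Φ (i y)‖ * ‖eY y‖ ≤ 1 * ‖eY y‖ :=
          mul_le_mul_of_nonneg_right (hΦnorm _) (norm_nonneg _)
        _ = ‖eY y‖ := one_mul _
      exact pow_le_pow_left₀ (norm_nonneg _) this 2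
    -- lower bound : c ≤ ‖MY Φ e0‖²
    have hlow : c ≤ ‖MY Φ e0‖ ^ 2 := by
      have h1 : ‖MY Φ e0‖ ^ 2 = ∫ y, ‖Φ (i y) • eY y‖ ^ 2 ∂μY := by
        rw [my_norm_sq_eq_integral]
        refine integral_congr_ae ?_
        filter_upwards [hMY Φ e0] with y hy
        rw [hy]
      have h2 : c = ∫ y in K, ‖Φ (i y) • eY y‖ ^ 2 ∂μY := by
        rw [hc]
        refine setIntegral_congr_fun hKc.measurableSet fun y hy => ?_
        have : φ (i y) = 1 := hφ1 ⟨y, hy, rfl⟩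
        rw [hΦval, this]
        norm_num
      rw [h1, h2]
      refine setIntegral_le_integral hIntΦY (Filter.Eventually.of_forall fun y => ?_)
      positivity
    -- upper bound : ‖MZ Φ fLp‖² ≤ B n
    have hup : ‖MZ Φ fLp‖ ^ 2 ≤ B n := by
      have h1 : ‖MZ Φ fLp‖ ^ 2 = ∫ z, ‖Φ (j z) • fZ z‖ ^ 2 ∂μZ := by
        rw [my_norm_sq_eq_integral]
        refine integral_congr_ae ?_
        filter_upwards [hMZ Φ fLp] with z hz
        rw [hz]
      rw [h1, hB]
      have hmeasZ : AEStronglyMeasurable (fun z => ‖Φ (j z) • fZ z‖ ^ 2) μZ := by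
        have h1 : AEStronglyMeasurable (fun z => Φ (j z) • fZ z) μZ :=
          ((Φ.continuous.comp hjc).aestronglyMeasurable).smul (Lp.aestronglyMeasurable fLp)
        exact (h1.norm.aemeasurable.pow_const 2).aestronglyMeasurable
      have hIntΦZ : Integrable (fun z => ‖Φ (j z) • fZ z‖ ^ 2) μZ := by
        refine hIntZ.mono hmeasZ (Filter.Eventually.of_forall fun z => ?_)
        rw [Real.norm_of_nonneg (by positivity), Real.norm_of_nonneg (by positivity)]
        have : ‖Φ (j z) • fZ z‖ ≤ ‖fZ z‖ := by
          rw [norm_smul]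
          calc ‖Φ (j z)‖ * ‖fZ z‖ ≤ 1 * ‖fZ z‖ :=
            mul_le_mul_of_nonneg_right (hΦnorm _) (norm_nonneg _)
          _ = ‖fZ z‖ := one_mul _
        exact pow_le_pow_left₀ (norm_nonneg _) this 2
      refine integral_mono hIntΦZ
        (hIntZ.indicator ((hVopen n).preimage hjc).measurableSet) fun z => ?_
      by_cases hz : z ∈ j ⁻¹' V n
      · rw [Set.indicator_of_mem hz]
        have : ‖Φ (j z) • fZ z‖ ≤ ‖fZ z‖ := by
          rw [norm_smul]
          calc ‖Φ (j z)‖ * ‖fZ z‖ ≤ 1 * ‖fZ z‖ :=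
            mul_le_mul_of_nonneg_right (hΦnorm _) (norm_nonneg _)
          _ = ‖fZ z‖ := one_mul _
        exact pow_le_pow_left₀ (norm_nonneg _) this 2
      · rw [Set.indicator_of_notMem hz]
        have : φ (j z) = 0 := hφ0 hz
        rw [hΦval, this]
        norm_num
    calc c ≤ ‖MY Φ e0‖ ^ 2 := hlow
      _ = ‖MZ Φ fLp‖ ^ 2 := by rw [key Φ]
      _ ≤ B n := hup
  -- conclude
  have : c ≤ 0 := ge_of_tendsto' hBlim hcB
  linarith
end
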